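/- arXiv:2504.18323 — 5 statements merged into one kernel-verified Lean document; each statement's English description precedes it below -/
import Mathlib

section
/- For any tensors Y, Z ∈ ℝ^{n1×n2×n3}, any fixed data tensor X ∈ ℝ^{n1×n2×n3}, and any γ > 0, the Welsch loss ψ(Y) = 2γ Σ_{ijk} (1 − exp(−(Y_{ijk} − X_{ijk})²/(2γ))) is bounded above by its quadratic surrogate: ψ(Y) ≤ ψ̂(Y; Z), where ψ̂(Y; Z) = ψ(Z) + Σ_{ijk} ω(Z)_{ijk}(Y_{ijk} − X_{ijk})² − Σ_{ijk} ω(Z)_{ijk}(Z_{ijk} − X_{ijk})² and ω(Z)_{ijk} = exp(−(Z_{ijk} − X_{ijk})²/(2γ)). -/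
/-- The Welsch loss ψ(Y) = 2γ Σ_p (1 − exp(−(Y_p − X_p)²/(2γ))). -/
noncomputable def welsch {n1 n2 n3 : ℕ} (γ : ℝ) (X Y : Fin n1 × Fin n2 × Fin n3 → ℝ) : ℝ :=
  2 * γ * ∑ p : Fin n1 × Fin n2 × Fin n3, (1 - Real.exp (-(Y p - X p) ^ 2 / (2 * γ)))

/-- The exponential weight ω(Z)_p = exp(−(Z_p − X_p)²/(2γ)). -/
noncomputable def weight {n1 n2 n3 : ℕ} (γ : ℝ) (X Z : Fin n1 × Fin n2 × Fin n3 → ℝ) :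
    Fin n1 × Fin n2 × Fin n3 → ℝ :=
  fun p => Real.exp (-(Z p - X p) ^ 2 / (2 * γ))

/-- The quadratic surrogate ψ̂(Y; Z). -/
noncomputable def welschSurrogate {n1 n2 n3 : ℕ} (γ : ℝ)
    (X Y Z : Fin n1 × Fin n2 × Fin n3 → ℝ) : ℝ :=
  welsch γ X Z + ∑ p : Fin n1 × Fin n2 × Fin n3, weight γ X Z p * (Y p - X p) ^ 2
    - ∑ p : Fin n1 × Fin n2 × Fin n3, weight γ X Z p * (Z p - X p) ^ 2

/-- The Welsch loss is bounded above by its quadratic surrogate. -/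
theorem welsch_le_surrogate {n1 n2 n3 : ℕ} (γ : ℝ) (hγ : 0 < γ)
    (X Y Z : Fin n1 × Fin n2 × Fin n3 → ℝ) :
    welsch γ X Y ≤ welschSurrogate γ X Y Z := by
  unfold welschSurrogate welsch weight
  rw [Finset.mul_sum, Finset.mul_sum, ← Finset.sum_add_distrib, ← Finset.sum_sub_distrib]
  refine Finset.sum_le_sum fun p _ => ?_
  set A := (Y p - X p) ^ 2 with hA
  set B := (Z p - X p) ^ 2 with hB
  have hx := Real.add_one_le_exp ((B - A) / (2 * γ))
  have hw : (0:ℝ) < Real.exp (-B / (2 * γ)) := Real.exp_pos _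
  have h2 : Real.exp (-B / (2 * γ)) * ((B - A) / (2 * γ) + 1)
      ≤ Real.exp (-A / (2 * γ)) := by
    calc Real.exp (-B / (2 * γ)) * ((B - A) / (2 * γ) + 1)
        ≤ Real.exp (-B / (2 * γ)) * Real.exp ((B - A) / (2 * γ)) := by
          exact mul_le_mul_of_nonneg_left hx hw.le
      _ = Real.exp (-A / (2 * γ)) := by
          rw [← Real.exp_add]; ring_nf
  have h2γ : (0:ℝ) < 2 * γ := by linarith
  have := mul_le_mul_of_nonneg_left h2 h2γ.le
  have heq : 2 * γ * (Real.exp (-B / (2 * γ)) * ((B - A) / (2 * γ)) + Real.exp (-B / (2 * γ)) * 1)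
      = Real.exp (-B / (2 * γ)) * (B - A) + 2 * γ * Real.exp (-B / (2 * γ)) := by
    field_simp
  rw [mul_add] at this
  rw [heq] at this
  nlinarith [this]
end

section
/- Fix α₁ > 0, α₂ > 0, a tensor Y ∈ ℝ^{n1×n2×n3}, matrices U_{it} ∈ ℝ^{n_i×r_i} (i = 1,2,3), and a core tensor G_t ∈ ℝ^{r1×r2×r3}. Suppose U_{1,t+1} minimizes U₁ ↦ ‖(U₁, U_{2t}, U_{3t})·G_t − Y‖²_F + α₁‖U₁ − U_{1t}‖²_F, U_{2,t+1} minimizes U₂ ↦ ‖(U_{1,t+1}, U₂, U_{3t})·G_t − Y‖²_F + α₁‖U₂ − U_{2t}‖²_F, U_{3,t+1} minimizes U₃ ↦ ‖(U_{1,t+1}, U_{2,t+1}, U₃)·G_t − Y‖²_F + α₁‖U₃ − U_{3t}‖²_F, and G_{t+1} minimizes G ↦ ‖(U_{1,t+1}, U_{2,t+1}, U_{3,t+1})·G − Y‖²_F + α₂‖G − G_t‖²_F. Then, with L_t = (U_{1t}, U_{2t}, U_{3t})·G_t and L_{t+1} = (U_{1,t+1}, U_{2,t+1}, U_{3,t+1})·G_{t+1},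 one has ‖L_{t+1} − Y‖²_F + α₁ Σ_{i=1}^{3} ‖U_{i,t+1} − U_{it}‖²_F + α₂‖G_{t+1} − G_t‖²_F ≤ ‖L_t − Y‖²_F. -/
open Matrix

/-- The Tucker multilinear action `(A₁, A₂, A₃)·G` of three matrices on a core tensor,
defined entrywise by `[(A₁, A₂, A₃)·G]_{ijk} = Σ_{a,b,c} (A₁)_{ia}(A₂)_{jb}(A₃)_{kc} G_{abc}`. -/
noncomputable def tucker {m1 m2 m3 r1 r2 r3 : ℕ}
    (A1 : Matrix (Fin m1) (Fin r1) ℝ) (A2 : Matrix (Fin m2) (Fin r2) ℝ)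
    (A3 : Matrix (Fin m3) (Fin r3) ℝ) (G : Fin r1 × Fin r2 × Fin r3 → ℝ) :
    Fin m1 × Fin m2 × Fin m3 → ℝ :=
  fun p => ∑ a, ∑ b, ∑ c, A1 p.1 a * A2 p.2.1 b * A3 p.2.2 c * G (a, b, c)

/-- Squared Frobenius norm of a matrix: the sum of squares of all entries. -/
noncomputable def frobSqM {n m : ℕ} (A : Matrix (Fin n) (Fin m) ℝ) : ℝ :=
  ∑ i, ∑ j, A i j ^ 2

/-- Squared Frobenius norm of a tensor: the sum of squares of all entries. -/
noncomputable def frobSqT {n1 n2 n3 : ℕ} (Z : Fin n1 × Fin n2 × Fin n3 → ℝ) : ℝ :=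
  ∑ p : Fin n1 × Fin n2 × Fin n3, Z p ^ 2

/-- One sweep of proximal block coordinate descent on the Tucker factors and core decreases
the least-squares fit by at least the accumulated proximal terms. -/
theorem pbcd_sweep_descent {n1 n2 n3 r1 r2 r3 : ℕ} (α1 α2 : ℝ) (hα1 : 0 < α1) (hα2 : 0 < α2)
    (Y : Fin n1 × Fin n2 × Fin n3 → ℝ)
    (U1t U1n : Matrix (Fin n1) (Fin r1) ℝ) (U2t U2n : Matrix (Fin n2) (Fin r2) ℝ)
    (U3t U3n : Matrix (Fin n3) (Fin r3) ℝ) (Gt Gn : Fin r1 × Fin r2 × Fin r3 → ℝ)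
    (hU1 : ∀ U1 : Matrix (Fin n1) (Fin r1) ℝ,
      frobSqT (tucker U1n U2t U3t Gt - Y) + α1 * frobSqM (U1n - U1t)
        ≤ frobSqT (tucker U1 U2t U3t Gt - Y) + α1 * frobSqM (U1 - U1t))
    (hU2 : ∀ U2 : Matrix (Fin n2) (Fin r2) ℝ,
      frobSqT (tucker U1n U2n U3t Gt - Y) + α1 * frobSqM (U2n - U2t)
        ≤ frobSqT (tucker U1n U2 U3t Gt - Y) + α1 * frobSqM (U2 - U2t))
    (hU3 : ∀ U3 : Matrix (Fin n3) (Fin r3) ℝ,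
      frobSqT (tucker U1n U2n U3n Gt - Y) + α1 * frobSqM (U3n - U3t)
        ≤ frobSqT (tucker U1n U2n U3 Gt - Y) + α1 * frobSqM (U3 - U3t))
    (hG : ∀ G : Fin r1 × Fin r2 × Fin r3 → ℝ,
      frobSqT (tucker U1n U2n U3n Gn - Y) + α2 * frobSqT (Gn - Gt)
        ≤ frobSqT (tucker U1n U2n U3n G - Y) + α2 * frobSqT (G - Gt)) :
    frobSqT (tucker U1n U2n U3n Gn - Y)
      + α1 * (frobSqM (U1n - U1t) + frobSqM (U2n - U2t) + frobSqM (U3n - U3t))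
      + α2 * frobSqT (Gn - Gt)
    ≤ frobSqT (tucker U1t U2t U3t Gt - Y) := by
  have h1 := hU1 U1t
  have h2 := hU2 U2t
  have h3 := hU3 U3t
  have h4 := hG Gt
  simp only [sub_self, frobSqM, frobSqT, Matrix.zero_apply, Pi.zero_apply, ne_eq,
    OfNat.ofNat_ne_zero, not_false_eq_true, zero_pow, Finset.sum_const_zero,
    mul_zero, add_zero] at h1 h2 h3 h4
  simp only [frobSqM, frobSqT] at *
  linarith
end

section
/- Under the hypotheses of the proximal block coordinate descent step (U_{1,t+1}, U_{2,t+1}, U_{3,t+1}, G_{t+1} successively minimize their respective proximal least-squares subproblems against the fixed tensor Y_{t+1}), and with Ψ(Y, L) = ‖L − Y‖²_F + λψ(Y) for λ > 0 and fixed X, γ > 0, one has Ψ(Y_{t+1}, L_{t+1}) + α₁ Σ_{i=1}^{3} ‖U_{i,t+1} − U_{it}‖²_F + α₂‖G_{t+1} − G_t‖²_F ≤ Ψ(Y_{t+1}, L_t), where L_t = (U_{1t}, U_{2t}, U_{3t})·G_t and L_{t+1} = (U_{1,t+1}, U_{2,t+1}, U_{3,t+1})·G_{t+1}. -/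
/-- The objective Ψ(Y, L) = ‖L − Y‖²_F + λψ(Y). -/
noncomputable def PsiObj {n1 n2 n3 : ℕ} (γ lam : ℝ)
    (X Y L : Fin n1 × Fin n2 × Fin n3 → ℝ) : ℝ :=
  (∑ p : Fin n1 × Fin n2 × Fin n3, (L p - Y p) ^ 2) + lam * welsch γ X Y

/-- The proximal block coordinate descent sweep on the Tucker factors and core decreases the
full objective `Ψ(Y_{t+1}, ·)` by at least the accumulated proximal terms. -/
theorem pbcd_sweep_descent_Psi {n1 n2 n3 r1 r2 r3 : ℕ}
    (γ lam α1 α2 : ℝ) (hγ : 0 < γ) (hlam : 0 < lam) (hα1 : 0 < α1) (hα2 : 0 < α2)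
    (X Yt1 : Fin n1 × Fin n2 × Fin n3 → ℝ)
    (U1t U1n : Matrix (Fin n1) (Fin r1) ℝ) (U2t U2n : Matrix (Fin n2) (Fin r2) ℝ)
    (U3t U3n : Matrix (Fin n3) (Fin r3) ℝ) (Gt Gn : Fin r1 × Fin r2 × Fin r3 → ℝ)
    (hU1 : ∀ U1 : Matrix (Fin n1) (Fin r1) ℝ,
      frobSqT (tucker U1n U2t U3t Gt - Yt1) + α1 * frobSqM (U1n - U1t)
        ≤ frobSqT (tucker U1 U2t U3t Gt - Yt1) + α1 * frobSqM (U1 - U1t))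
    (hU2 : ∀ U2 : Matrix (Fin n2) (Fin r2) ℝ,
      frobSqT (tucker U1n U2n U3t Gt - Yt1) + α1 * frobSqM (U2n - U2t)
        ≤ frobSqT (tucker U1n U2 U3t Gt - Yt1) + α1 * frobSqM (U2 - U2t))
    (hU3 : ∀ U3 : Matrix (Fin n3) (Fin r3) ℝ,
      frobSqT (tucker U1n U2n U3n Gt - Yt1) + α1 * frobSqM (U3n - U3t)
        ≤ frobSqT (tucker U1n U2n U3 Gt - Yt1) + α1 * frobSqM (U3 - U3t))
    (hG : ∀ G : Fin r1 × Fin r2 × Fin r3 → ℝ,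
      frobSqT (tucker U1n U2n U3n Gn - Yt1) + α2 * frobSqT (Gn - Gt)
        ≤ frobSqT (tucker U1n U2n U3n G - Yt1) + α2 * frobSqT (G - Gt)) :
    PsiObj γ lam X Yt1 (tucker U1n U2n U3n Gn)
      + α1 * (frobSqM (U1n - U1t) + frobSqM (U2n - U2t) + frobSqM (U3n - U3t))
      + α2 * frobSqT (Gn - Gt)
    ≤ PsiObj γ lam X Yt1 (tucker U1t U2t U3t Gt) := by
  have hz1 : frobSqM (U1t - U1t) = 0 := by simp [frobSqM]
  have hz2 : frobSqM (U2t - U2t) = 0 := by simp [frobSqM]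
  have hz3 : frobSqM (U3t - U3t) = 0 := by simp [frobSqM]
  have hzG : frobSqT (Gt - Gt) = 0 := by simp [frobSqT]
  have h1 := hU1 U1t
  have h2 := hU2 U2t
  have h3 := hU3 U3t
  have h4 := hG Gt
  rw [hz1] at h1; rw [hz2] at h2; rw [hz3] at h3; rw [hzG] at h4
  simp only [PsiObj]
  have e1 : ∀ L : Fin n1 × Fin n2 × Fin n3 → ℝ,
      (∑ p : Fin n1 × Fin n2 × Fin n3, (L p - Yt1 p) ^ 2) = frobSqT (L - Yt1) := by
    intro L; simp [frobSqT]
  rw [e1, e1]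
  nlinarith [h1, h2, h3, h4]
end

section
/- Let B = {Y ∈ ℝ^{n1×n2×n3} : max_{ijk}|Y_{ijk}| ≤ a} with a > 0, let λ > 0, γ > 0, X ∈ ℝ^{n1×n2×n3}, and let Ψ(Y, L) = ‖L − Y‖²_F + λψ(Y). Suppose the SDAO iterates x_t = (Y_t, U_{1t}, U_{2t}, U_{3t}, G_t) with L_t = (U_{1t}, U_{2t}, U_{3t})·G_t are generated by: Y_{t+1} = argmin over Y ∈ B of Ψ̂(Y, L_t; Y_t), followed by successive exact minimization of the proximal least-squares subproblems for U_{1,t+1}, U_{2,t+1}, U_{3,t+1}, G_{t+1} against Y_{t+1}; assume the whole iterate sequence remains in a bounded set. Then every cluster point x* = (Y*, U₁*, U₂*, U₃*, G*) of the sequence (x_t) is a first-order stationary point of the problem of minimizing Ψ(Y, (U₁,U₂,U₃)·G) over Y ∈ B and unconstrained (U₁,U₂,U₃,G): namely, the gradient of Ψ(·, L*) at Y* satisfies the variational inequality ⟨∇_Y Ψ(Y*, L*), Y − Y*⟩ ≥ 0 for all Y ∈ B (where L* = (U₁*,U₂*,U₃*)·G*), and the gradients of (U₁,U₂,U₃,G)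 ↦ ‖(U₁,U₂,U₃)·G − Y*‖²_F vanish at (U₁*, U₂*, U₃*, G*). -/
/-- The surrogate objective Ψ̂(Y, L; Z) = ‖L − Y‖²_F + λψ̂(Y; Z). -/
noncomputable def PsiSurrogate {n1 n2 n3 : ℕ} (γ lam : ℝ)
    (X Y L Z : Fin n1 × Fin n2 × Fin n3 → ℝ) : ℝ :=
  (∑ p : Fin n1 × Fin n2 × Fin n3, (L p - Y p) ^ 2) + lam * welschSurrogate γ X Y Z

open Filter Matrix

open Topology

section AuxScalar

lemma nonneg_of_quad (c q : ℝ) (hq : 0 ≤ q)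
    (h : ∀ s : ℝ, 0 < s → s ≤ 1 → 0 ≤ s * c + s ^ 2 * q) : 0 ≤ c := by
  by_contra hc
  push_neg at hc
  set s : ℝ := min 1 (-c / (2 * (q + 1))) with hs
  have hs0 : 0 < s := lt_min one_pos (div_pos (by linarith) (by linarith))
  have hs1 : s ≤ 1 := min_le_left _ _
  have h2 : s ≤ -c / (2 * (q + 1)) := min_le_right _ _
  have key := h s hs0 hs1
  have hsq : s * q ≤ -c / 2 := by
    have h3 : s * (q + 1) ≤ (-c / (2 * (q + 1))) * (q + 1) := by nlinarith
    have h4 : (-c / (2 * (q + 1))) * (q + 1) = -c / 2 := by field_simp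
    nlinarith
  nlinarith [sq_nonneg s]

lemma eq_zero_of_quad (c q : ℝ) (hq : 0 ≤ q)
    (h : ∀ s : ℝ, 0 ≤ s * c + s ^ 2 * q) : c = 0 := by
  have h1 : 0 ≤ c := nonneg_of_quad c q hq (fun s hs _ => h s)
  have h2 : 0 ≤ -c := nonneg_of_quad (-c) q hq (fun s hs _ => by have := h (-s); nlinarith)
  linarith

lemma welsch_pt (γ u v : ℝ) (hγ : 0 < γ) :
    2 * γ * (1 - Real.exp (-u ^ 2 / (2 * γ))) ≤
      2 * γ * (1 - Real.exp (-v ^ 2 / (2 * γ)))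
        + Real.exp (-v ^ 2 / (2 * γ)) * u ^ 2 - Real.exp (-v ^ 2 / (2 * γ)) * v ^ 2 := by
  set E := Real.exp (-v ^ 2 / (2 * γ)) with hE
  set w : ℝ := (u ^ 2 - v ^ 2) / (2 * γ) with hw
  have hne : (2 * γ) ≠ 0 := by positivity
  have hEu : Real.exp (-u ^ 2 / (2 * γ)) = E * Real.exp (-w) := by
    rw [hE, ← Real.exp_add]
    congr 1
    rw [hw]
    field_simp
    ring
  have hexp : 1 - Real.exp (-w) ≤ w := by
    have := Real.add_one_le_exp (-w); linarith
  have hEpos : 0 < E := Real.exp_pos _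
  have h2 : 2 * γ * w = u ^ 2 - v ^ 2 := by rw [hw]; field_simp
  rw [hEu]
  nlinarith [mul_le_mul_of_nonneg_left hexp (le_of_lt hEpos)]

lemma abs_tendsto_zero_of_sq {f : ℕ → ℝ} (h : Filter.Tendsto (fun t => (f t) ^ 2) Filter.atTop (𝓝 0)) :
    Filter.Tendsto f Filter.atTop (𝓝 0) := by
  rw [tendsto_zero_iff_abs_tendsto_zero]
  have h2 := (Real.continuous_sqrt.tendsto 0).comp h
  simpa [Function.comp_def, Real.sqrt_sq_eq_abs] using h2

lemma succ_tendsto {f : ℕ → ℝ} {l : ℝ} {φ : ℕ → ℕ} (hφ : StrictMono φ)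
    (h : Filter.Tendsto (fun k => f (φ k)) Filter.atTop (𝓝 l))
    (hd : Filter.Tendsto (fun t => f (t + 1) - f t) Filter.atTop (𝓝 0)) :
    Filter.Tendsto (fun k => f (φ k + 1)) Filter.atTop (𝓝 l) := by
  have h2 : Filter.Tendsto (fun k => f (φ k + 1) - f (φ k)) Filter.atTop (𝓝 0) :=
    hd.comp hφ.tendsto_atTop
  have h3 := h.add h2
  have h4 : (fun k => f (φ k) + (f (φ k + 1) - f (φ k))) = fun k => f (φ k + 1) :=
    funext fun k => by ring
  rw [h4] at h3
  simpa using h3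

end AuxScalar

section Aux
variable {n1 n2 n3 r1 r2 r3 : ℕ}

lemma frobSqT_nonneg (Z : Fin n1 × Fin n2 × Fin n3 → ℝ) : 0 ≤ frobSqT Z :=
  Finset.sum_nonneg fun p _ => sq_nonneg _

lemma frobSqM_nonneg (A : Matrix (Fin n1) (Fin r1) ℝ) : 0 ≤ frobSqM A :=
  Finset.sum_nonneg fun i _ => Finset.sum_nonneg fun j _ => sq_nonneg _

lemma frobSqT_zero : frobSqT (0 : Fin n1 × Fin n2 × Fin n3 → ℝ) = 0 := by simp [frobSqT]

lemma frobSqM_zero : frobSqM (0 : Matrix (Fin n1) (Fin r1) ℝ) = 0 := by simp [frobSqM]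

lemma frobSqT_sub (A B : Fin n1 × Fin n2 × Fin n3 → ℝ) :
    frobSqT (A - B) = ∑ p : Fin n1 × Fin n2 × Fin n3, (A p - B p) ^ 2 := by
  simp [frobSqT]

lemma psiObj_eq (γ lam : ℝ) (X Yv Lv : Fin n1 × Fin n2 × Fin n3 → ℝ) :
    PsiObj γ lam X Yv Lv = frobSqT (Lv - Yv) + lam * welsch γ X Yv := by
  simp [PsiObj, frobSqT]

lemma psiSurr_expand (γ lam : ℝ) (X Z L Y0 d : Fin n1 × Fin n2 × Fin n3 → ℝ) (s : ℝ) :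
    PsiSurrogate γ lam X (fun p => Y0 p + s * d p) L Z
      = PsiSurrogate γ lam X Y0 L Z
        + s * (∑ p : Fin n1 × Fin n2 × Fin n3,
            (2 * (Y0 p - L p) + lam * (2 * weight γ X Z p * (Y0 p - X p))) * d p)
        + s ^ 2 * (∑ p : Fin n1 × Fin n2 × Fin n3, (1 + lam * weight γ X Z p) * d p ^ 2) := by
  have hA : ∑ p : Fin n1 × Fin n2 × Fin n3, (L p - (Y0 p + s * d p)) ^ 2
      = ∑ p : Fin n1 × Fin n2 × Fin n3, (L p - Y0 p) ^ 2
        + s * ∑ p : Fin n1 × Fin n2 × Fin n3, 2 * (Y0 p - L p) * d p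
        + s ^ 2 * ∑ p : Fin n1 × Fin n2 × Fin n3, d p ^ 2 := by
    rw [Finset.mul_sum, Finset.mul_sum, ← Finset.sum_add_distrib, ← Finset.sum_add_distrib]
    exact Finset.sum_congr rfl fun p _ => by ring
  have hB : ∑ p : Fin n1 × Fin n2 × Fin n3, weight γ X Z p * (Y0 p + s * d p - X p) ^ 2
      = ∑ p : Fin n1 × Fin n2 × Fin n3, weight γ X Z p * (Y0 p - X p) ^ 2
        + s * ∑ p : Fin n1 × Fin n2 × Fin n3, 2 * weight γ X Z p * (Y0 p - X p) * d p
        + s ^ 2 * ∑ p : Fin n1 × Fin n2 × Fin n3, weight γ X Z p * d p ^ 2 := by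
    rw [Finset.mul_sum, Finset.mul_sum, ← Finset.sum_add_distrib, ← Finset.sum_add_distrib]
    exact Finset.sum_congr rfl fun p _ => by ring
  have hC : ∑ p : Fin n1 × Fin n2 × Fin n3,
        (2 * (Y0 p - L p) + lam * (2 * weight γ X Z p * (Y0 p - X p))) * d p
      = (∑ p : Fin n1 × Fin n2 × Fin n3, 2 * (Y0 p - L p) * d p)
        + lam * ∑ p : Fin n1 × Fin n2 × Fin n3, 2 * weight γ X Z p * (Y0 p - X p) * d p := by
    rw [Finset.mul_sum, ← Finset.sum_add_distrib]
    exact Finset.sum_congr rfl fun p _ => by ring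
  have hQ : ∑ p : Fin n1 × Fin n2 × Fin n3, (1 + lam * weight γ X Z p) * d p ^ 2
      = (∑ p : Fin n1 × Fin n2 × Fin n3, d p ^ 2)
        + lam * ∑ p : Fin n1 × Fin n2 × Fin n3, weight γ X Z p * d p ^ 2 := by
    rw [Finset.mul_sum, ← Finset.sum_add_distrib]
    exact Finset.sum_congr rfl fun p _ => by ring
  simp only [PsiSurrogate, welschSurrogate]
  linear_combination hA + lam * hB - s * hC - s ^ 2 * hQ

lemma tucker_add_left (A V : Matrix (Fin n1) (Fin r1) ℝ) (B : Matrix (Fin n2) (Fin r2) ℝ)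
    (C : Matrix (Fin n3) (Fin r3) ℝ) (G : Fin r1 × Fin r2 × Fin r3 → ℝ) (s : ℝ) (p) :
    tucker (A + s • V) B C G p = tucker A B C G p + s * tucker V B C G p := by
  simp only [tucker, Matrix.add_apply, Matrix.smul_apply, smul_eq_mul, Finset.mul_sum,
    ← Finset.sum_add_distrib]
  exact Finset.sum_congr rfl fun a _ => Finset.sum_congr rfl fun b _ =>
    Finset.sum_congr rfl fun c _ => by ring

lemma tucker_add_mid (A : Matrix (Fin n1) (Fin r1) ℝ) (B V : Matrix (Fin n2) (Fin r2) ℝ)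
    (C : Matrix (Fin n3) (Fin r3) ℝ) (G : Fin r1 × Fin r2 × Fin r3 → ℝ) (s : ℝ) (p) :
    tucker A (B + s • V) C G p = tucker A B C G p + s * tucker A V C G p := by
  simp only [tucker, Matrix.add_apply, Matrix.smul_apply, smul_eq_mul, Finset.mul_sum,
    ← Finset.sum_add_distrib]
  exact Finset.sum_congr rfl fun a _ => Finset.sum_congr rfl fun b _ =>
    Finset.sum_congr rfl fun c _ => by ring

lemma tucker_add_right (A : Matrix (Fin n1) (Fin r1) ℝ) (B : Matrix (Fin n2) (Fin r2) ℝ)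
    (C V : Matrix (Fin n3) (Fin r3) ℝ) (G : Fin r1 × Fin r2 × Fin r3 → ℝ) (s : ℝ) (p) :
    tucker A B (C + s • V) G p = tucker A B C G p + s * tucker A B V G p := by
  simp only [tucker, Matrix.add_apply, Matrix.smul_apply, smul_eq_mul, Finset.mul_sum,
    ← Finset.sum_add_distrib]
  exact Finset.sum_congr rfl fun a _ => Finset.sum_congr rfl fun b _ =>
    Finset.sum_congr rfl fun c _ => by ring

lemma tucker_add_core (A : Matrix (Fin n1) (Fin r1) ℝ) (B : Matrix (Fin n2) (Fin r2) ℝ)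
    (C : Matrix (Fin n3) (Fin r3) ℝ) (G H : Fin r1 × Fin r2 × Fin r3 → ℝ) (s : ℝ) (p) :
    tucker A B C (G + s • H) p = tucker A B C G p + s * tucker A B C H p := by
  simp only [tucker, Pi.add_apply, Pi.smul_apply, smul_eq_mul, Finset.mul_sum,
    ← Finset.sum_add_distrib]
  exact Finset.sum_congr rfl fun a _ => Finset.sum_congr rfl fun b _ =>
    Finset.sum_congr rfl fun c _ => by ring

lemma frobSq_expand (T W Ys : Fin n1 × Fin n2 × Fin n3 → ℝ) (s : ℝ) :
    (∑ p : Fin n1 × Fin n2 × Fin n3, (T p + s * W p - Ys p) ^ 2)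
      = (∑ p : Fin n1 × Fin n2 × Fin n3, (T p - Ys p) ^ 2)
        + s * (∑ p : Fin n1 × Fin n2 × Fin n3, 2 * (T p - Ys p) * W p)
        + s ^ 2 * (∑ p : Fin n1 × Fin n2 × Fin n3, W p ^ 2) := by
  rw [Finset.mul_sum, Finset.mul_sum, ← Finset.sum_add_distrib, ← Finset.sum_add_distrib]
  exact Finset.sum_congr rfl fun p _ => by ring

lemma frobSqM_smul_diff (A V : Matrix (Fin n1) (Fin r1) ℝ) (s : ℝ) :
    frobSqM ((A + s • V) - A) = s ^ 2 * frobSqM V := by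
  have h : (A + s • V) - A = s • V := add_sub_cancel_left A (s • V)
  rw [h]
  simp only [frobSqM, Matrix.smul_apply, smul_eq_mul, mul_pow, Finset.mul_sum]

lemma frobSqT_smul_diff (G H : Fin r1 × Fin r2 × Fin r3 → ℝ) (s : ℝ) :
    frobSqT ((G + s • H) - G) = s ^ 2 * frobSqT H := by
  have h : (G + s • H) - G = s • H := add_sub_cancel_left G (s • H)
  rw [h]
  simp only [frobSqT, Pi.smul_apply, smul_eq_mul, mul_pow, Finset.mul_sum]

lemma welsch_nonneg (γ : ℝ) (hγ : 0 < γ) (X Y' : Fin n1 × Fin n2 × Fin n3 → ℝ) :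
    0 ≤ welsch γ X Y' := by
  apply mul_nonneg (by linarith)
  apply Finset.sum_nonneg
  intro p _
  have h1 : Real.exp (-(Y' p - X p) ^ 2 / (2 * γ)) ≤ 1 := by
    rw [Real.exp_le_one_iff]
    exact div_nonpos_of_nonpos_of_nonneg (neg_nonpos.mpr (sq_nonneg _)) (by linarith)
  linarith

lemma psiSurr_self (γ lam : ℝ) (X L Z : Fin n1 × Fin n2 × Fin n3 → ℝ) :
    PsiSurrogate γ lam X Z L Z = PsiObj γ lam X Z L := by
  simp [PsiSurrogate, PsiObj, welschSurrogate]

lemma welsch_le_surr (γ : ℝ) (hγ : 0 < γ) (X Y Z : Fin n1 × Fin n2 × Fin n3 → ℝ) :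
    welsch γ X Y ≤ welschSurrogate γ X Y Z := by
  have hs : welschSurrogate γ X Y Z = ∑ p : Fin n1 × Fin n2 × Fin n3,
      (2 * γ * (1 - Real.exp (-(Z p - X p) ^ 2 / (2 * γ)))
        + weight γ X Z p * (Y p - X p) ^ 2 - weight γ X Z p * (Z p - X p) ^ 2) := by
    simp only [welschSurrogate, welsch, Finset.mul_sum, ← Finset.sum_add_distrib,
      ← Finset.sum_sub_distrib]
  rw [hs, welsch, Finset.mul_sum]
  refine Finset.sum_le_sum fun p _ => ?_
  simpa [weight] using welsch_pt γ (Y p - X p) (Z p - X p) hγ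

lemma psiObj_le_psiSurr (γ lam : ℝ) (hγ : 0 < γ) (hlam : 0 < lam)
    (X Y L Z : Fin n1 × Fin n2 × Fin n3 → ℝ) :
    PsiObj γ lam X Y L ≤ PsiSurrogate γ lam X Y L Z := by
  have key := welsch_le_surr γ hγ X Y Z
  have := mul_le_mul_of_nonneg_left key (le_of_lt hlam)
  simp only [PsiObj, PsiSurrogate]
  linarith

lemma cont_tucker : Continuous (fun w : Matrix (Fin n1) (Fin r1) ℝ × Matrix (Fin n2) (Fin r2) ℝ
      × Matrix (Fin n3) (Fin r3) ℝ × (Fin r1 × Fin r2 × Fin r3 → ℝ) =>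
      tucker w.1 w.2.1 w.2.2.1 w.2.2.2) := by
  unfold tucker
  fun_prop

lemma cont_frobSqT : Continuous (fun Z : Fin n1 × Fin n2 × Fin n3 → ℝ => frobSqT Z) := by
  unfold frobSqT; fun_prop

lemma cont_frobSqM : Continuous (fun A : Matrix (Fin n1) (Fin r1) ℝ => frobSqM A) := by
  unfold frobSqM; fun_prop

lemma cont_psiSurr (γ lam : ℝ) (X : Fin n1 × Fin n2 × Fin n3 → ℝ) :
    Continuous (fun w : (Fin n1 × Fin n2 × Fin n3 → ℝ) × (Fin n1 × Fin n2 × Fin n3 → ℝ)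
      × (Fin n1 × Fin n2 × Fin n3 → ℝ) => PsiSurrogate γ lam X w.1 w.2.1 w.2.2) := by
  unfold PsiSurrogate welschSurrogate welsch weight
  fun_prop

lemma entryT_tendsto_zero {f : ℕ → (Fin n1 × Fin n2 × Fin n3 → ℝ)}
    (h : Filter.Tendsto (fun t => frobSqT (f t)) Filter.atTop (𝓝 0))
    (p : Fin n1 × Fin n2 × Fin n3) :
    Filter.Tendsto (fun t => f t p) Filter.atTop (𝓝 0) := by
  apply abs_tendsto_zero_of_sq
  refine squeeze_zero (fun t => sq_nonneg _) (fun t => ?_) h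
  exact Finset.single_le_sum (fun q _ => sq_nonneg (f t q)) (Finset.mem_univ p)

lemma entryM_tendsto_zero {f : ℕ → Matrix (Fin n1) (Fin r1) ℝ}
    (h : Filter.Tendsto (fun t => frobSqM (f t)) Filter.atTop (𝓝 0))
    (i : Fin n1) (j : Fin r1) :
    Filter.Tendsto (fun t => f t i j) Filter.atTop (𝓝 0) := by
  apply abs_tendsto_zero_of_sq
  refine squeeze_zero (fun t => sq_nonneg _) (fun t => ?_) h
  calc (f t i j) ^ 2 ≤ ∑ j', (f t i j') ^ 2 :=
        Finset.single_le_sum (fun q _ => sq_nonneg (f t i q)) (Finset.mem_univ j)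
    _ ≤ frobSqM (f t) :=
        Finset.single_le_sum (fun i' _ => Finset.sum_nonneg fun q _ => sq_nonneg (f t i' q))
          (Finset.mem_univ i)

set_option maxHeartbeats 1000000 in
lemma tendsto_fit {A : ℕ → Matrix (Fin n1) (Fin r1) ℝ} {B : ℕ → Matrix (Fin n2) (Fin r2) ℝ}
    {C : ℕ → Matrix (Fin n3) (Fin r3) ℝ} {Gc : ℕ → (Fin r1 × Fin r2 × Fin r3 → ℝ)}
    {Yt : ℕ → (Fin n1 × Fin n2 × Fin n3 → ℝ)}
    {As : Matrix (Fin n1) (Fin r1) ℝ} {Bs : Matrix (Fin n2) (Fin r2) ℝ}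
    {Cs : Matrix (Fin n3) (Fin r3) ℝ} {Gcs : Fin r1 × Fin r2 × Fin r3 → ℝ}
    {Yts : Fin n1 × Fin n2 × Fin n3 → ℝ}
    (hA : Filter.Tendsto A Filter.atTop (𝓝 As)) (hB : Filter.Tendsto B Filter.atTop (𝓝 Bs))
    (hC : Filter.Tendsto C Filter.atTop (𝓝 Cs)) (hG : Filter.Tendsto Gc Filter.atTop (𝓝 Gcs))
    (hY : Filter.Tendsto Yt Filter.atTop (𝓝 Yts)) :
    Filter.Tendsto (fun k => frobSqT (tucker (A k) (B k) (C k) (Gc k) - Yt k)) Filter.atTop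
      (𝓝 (frobSqT (tucker As Bs Cs Gcs - Yts))) := by
  have h0 := (cont_tucker.tendsto (As, Bs, Cs, Gcs)).comp
    (hA.prodMk_nhds (hB.prodMk_nhds (hC.prodMk_nhds hG)))
  have h1 : Filter.Tendsto (fun k => tucker (A k) (B k) (C k) (Gc k)) Filter.atTop
      (𝓝 (tucker As Bs Cs Gcs)) := h0.congr fun k => rfl
  have h2 := (cont_frobSqT.tendsto (tucker As Bs Cs Gcs - Yts)).comp (h1.sub hY)
  exact h2.congr fun k => rfl

end Aux

lemma tendsto_zero_of_const_mul {c : ℝ} (hc : 0 < c) {f : ℕ → ℝ}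
    (hf : Filter.Tendsto (fun t => c * f t) Filter.atTop (𝓝 0)) :
    Filter.Tendsto f Filter.atTop (𝓝 0) := by
  have h2 := hf.const_mul c⁻¹
  rw [mul_zero] at h2
  have h3 : (fun t => c⁻¹ * (c * f t)) = f := funext fun t => by field_simp
  rwa [h3] at h2

lemma hasDerivAt_quad (K C Q : ℝ) :
    HasDerivAt (fun s : ℝ => K + s * C + s ^ 2 * Q) C 0 := by
  have h1 : HasDerivAt (fun s : ℝ => s) 1 0 := hasDerivAt_id 0
  have h2 : HasDerivAt (fun s : ℝ => s * C) C 0 := by simpa using h1.mul_const C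
  have h3 : HasDerivAt (fun s : ℝ => s ^ 2) 0 0 := by simpa using hasDerivAt_pow 2 (0:ℝ)
  have h4 : HasDerivAt (fun s : ℝ => s ^ 2 * Q) 0 0 := by simpa using h3.mul_const Q
  have h5 := ((hasDerivAt_const (0:ℝ) K).add h2).add h4
  rw [zero_add, add_zero] at h5
  exact h5

instance matrixFirstCountable (n m : ℕ) :
    FirstCountableTopology (Matrix (Fin n) (Fin m) ℝ) :=
  inferInstanceAs (FirstCountableTopology (Fin n → Fin m → ℝ))

set_option synthInstance.maxHeartbeats 1000000 in
set_option maxHeartbeats 2000000 in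
/-- Every cluster point of the SDAO iterates is a first-order stationary point: the
`Y`-gradient of `Ψ(·, L*)` at `Y*` satisfies the variational inequality over the box `B`,
and all directional derivatives of the Tucker least-squares fit with respect to the factor
matrices and the core tensor vanish at the cluster point. -/
theorem sdao_cluster_points_stationary {n1 n2 n3 r1 r2 r3 : ℕ}
    (γ lam a α1 α2 : ℝ) (hγ : 0 < γ) (hlam : 0 < lam) (ha : 0 < a)
    (hα1 : 0 < α1) (hα2 : 0 < α2)
    (X : Fin n1 × Fin n2 × Fin n3 → ℝ)
    (Y : ℕ → (Fin n1 × Fin n2 × Fin n3 → ℝ))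
    (U1 : ℕ → Matrix (Fin n1) (Fin r1) ℝ) (U2 : ℕ → Matrix (Fin n2) (Fin r2) ℝ)
    (U3 : ℕ → Matrix (Fin n3) (Fin r3) ℝ) (G : ℕ → (Fin r1 × Fin r2 × Fin r3 → ℝ))
    (L : ℕ → (Fin n1 × Fin n2 × Fin n3 → ℝ))
    (hL : ∀ t, L t = tucker (U1 t) (U2 t) (U3 t) (G t))
    (hYbox : ∀ t, ∀ p, |Y t p| ≤ a)
    (hYmin : ∀ t, ∀ Y' : Fin n1 × Fin n2 × Fin n3 → ℝ, (∀ p, |Y' p| ≤ a) →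
      PsiSurrogate γ lam X (Y (t + 1)) (L t) (Y t) ≤ PsiSurrogate γ lam X Y' (L t) (Y t))
    (hU1 : ∀ t, ∀ V : Matrix (Fin n1) (Fin r1) ℝ,
      frobSqT (tucker (U1 (t + 1)) (U2 t) (U3 t) (G t) - Y (t + 1))
          + α1 * frobSqM (U1 (t + 1) - U1 t)
        ≤ frobSqT (tucker V (U2 t) (U3 t) (G t) - Y (t + 1)) + α1 * frobSqM (V - U1 t))
    (hU2 : ∀ t, ∀ V : Matrix (Fin n2) (Fin r2) ℝ,
      frobSqT (tucker (U1 (t + 1)) (U2 (t + 1)) (U3 t) (G t) - Y (t + 1))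
          + α1 * frobSqM (U2 (t + 1) - U2 t)
        ≤ frobSqT (tucker (U1 (t + 1)) V (U3 t) (G t) - Y (t + 1)) + α1 * frobSqM (V - U2 t))
    (hU3 : ∀ t, ∀ V : Matrix (Fin n3) (Fin r3) ℝ,
      frobSqT (tucker (U1 (t + 1)) (U2 (t + 1)) (U3 (t + 1)) (G t) - Y (t + 1))
          + α1 * frobSqM (U3 (t + 1) - U3 t)
        ≤ frobSqT (tucker (U1 (t + 1)) (U2 (t + 1)) V (G t) - Y (t + 1))
          + α1 * frobSqM (V - U3 t))
    (hGmin : ∀ t, ∀ H : Fin r1 × Fin r2 × Fin r3 → ℝ,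
      frobSqT (tucker (U1 (t + 1)) (U2 (t + 1)) (U3 (t + 1)) (G (t + 1)) - Y (t + 1))
          + α2 * frobSqT (G (t + 1) - G t)
        ≤ frobSqT (tucker (U1 (t + 1)) (U2 (t + 1)) (U3 (t + 1)) H - Y (t + 1))
          + α2 * frobSqT (H - G t))
    (hbounded : ∃ C : ℝ, ∀ t, (∀ p, |Y t p| ≤ C) ∧ (∀ i a', |U1 t i a'| ≤ C) ∧
      (∀ j b, |U2 t j b| ≤ C) ∧ (∀ k c, |U3 t k c| ≤ C) ∧ (∀ q, |G t q| ≤ C)) :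
    ∀ (Ys : Fin n1 × Fin n2 × Fin n3 → ℝ) (U1s : Matrix (Fin n1) (Fin r1) ℝ)
      (U2s : Matrix (Fin n2) (Fin r2) ℝ) (U3s : Matrix (Fin n3) (Fin r3) ℝ)
      (Gs : Fin r1 × Fin r2 × Fin r3 → ℝ),
      MapClusterPt (Ys, U1s, U2s, U3s, Gs) atTop (fun t => (Y t, U1 t, U2 t, U3 t, G t)) →
      ((∀ Y' : Fin n1 × Fin n2 × Fin n3 → ℝ, (∀ p, |Y' p| ≤ a) →
          0 ≤ ∑ p : Fin n1 × Fin n2 × Fin n3,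
            (2 * (Ys p - tucker U1s U2s U3s Gs p)
              + lam * (2 * Real.exp (-(Ys p - X p) ^ 2 / (2 * γ)) * (Ys p - X p)))
            * (Y' p - Ys p)) ∧
       (∀ V : Matrix (Fin n1) (Fin r1) ℝ, HasDerivAt
          (fun s : ℝ => frobSqT (tucker (U1s + s • V) U2s U3s Gs - Ys)) 0 0) ∧
       (∀ V : Matrix (Fin n2) (Fin r2) ℝ, HasDerivAt
          (fun s : ℝ => frobSqT (tucker U1s (U2s + s • V) U3s Gs - Ys)) 0 0) ∧
       (∀ V : Matrix (Fin n3) (Fin r3) ℝ, HasDerivAt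
          (fun s : ℝ => frobSqT (tucker U1s U2s (U3s + s • V) Gs - Ys)) 0 0) ∧
       (∀ H : Fin r1 × Fin r2 × Fin r3 → ℝ, HasDerivAt
          (fun s : ℝ => frobSqT (tucker U1s U2s U3s (Gs + s • H) - Ys)) 0 0)) := by
  intro Ys U1s U2s U3s Gs hclu
  classical
  -- Part 1: sufficient decrease
  have hdec : ∀ t,
      PsiObj γ lam X (Y (t + 1)) (L (t + 1))
        + (frobSqT (fun p => Y (t + 1) p - Y t p)
          + α1 * frobSqM (U1 (t + 1) - U1 t) + α1 * frobSqM (U2 (t + 1) - U2 t)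
          + α1 * frobSqM (U3 (t + 1) - U3 t) + α2 * frobSqT (G (t + 1) - G t))
        ≤ PsiObj γ lam X (Y t) (L t) := by
    intro t
    have e1 := hU1 t (U1 t)
    have e2 := hU2 t (U2 t)
    have e3 := hU3 t (U3 t)
    have e4 := hGmin t (G t)
    simp only [sub_self, frobSqM_zero, frobSqT_zero, mul_zero, add_zero] at e1 e2 e3 e4
    set c := ∑ p : Fin n1 × Fin n2 × Fin n3,
        (2 * (Y (t + 1) p - L t p) + lam * (2 * weight γ X (Y t) p * (Y (t + 1) p - X p)))
          * (Y t p - Y (t + 1) p) with hcdef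
    set q := ∑ p : Fin n1 × Fin n2 × Fin n3,
        (1 + lam * weight γ X (Y t) p) * (Y t p - Y (t + 1) p) ^ 2 with hqdef
    have hexp : ∀ s : ℝ,
        PsiSurrogate γ lam X (fun p => Y (t + 1) p + s * (Y t p - Y (t + 1) p)) (L t) (Y t)
          = PsiSurrogate γ lam X (Y (t + 1)) (L t) (Y t) + s * c + s ^ 2 * q := by
      intro s
      rw [hcdef, hqdef]
      exact psiSurr_expand γ lam X (Y t) (L t) (Y (t + 1)) (fun p => Y t p - Y (t + 1) p) s
    have hq0 : 0 ≤ q := by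
      rw [hqdef]
      refine Finset.sum_nonneg fun p _ => mul_nonneg ?_ (sq_nonneg _)
      have h := Real.exp_pos (-(Y t p - X p) ^ 2 / (2 * γ))
      simp only [weight]
      nlinarith
    have hseg : ∀ s : ℝ, 0 < s → s ≤ 1 → 0 ≤ s * c + s ^ 2 * q := by
      intro s hs0 hs1
      have hbox : ∀ p, |Y (t + 1) p + s * (Y t p - Y (t + 1) p)| ≤ a := by
        intro p
        have h1 : Y (t + 1) p + s * (Y t p - Y (t + 1) p)
            = (1 - s) * Y (t + 1) p + s * Y t p := by ring
        rw [h1]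
        calc |(1 - s) * Y (t + 1) p + s * Y t p|
            ≤ |(1 - s) * Y (t + 1) p| + |s * Y t p| := abs_add_le _ _
          _ = (1 - s) * |Y (t + 1) p| + s * |Y t p| := by
              rw [abs_mul, abs_mul, abs_of_nonneg (by linarith : (0:ℝ) ≤ 1 - s),
                abs_of_nonneg hs0.le]
          _ ≤ (1 - s) * a + s * a := by
              have hb1 := hYbox (t + 1) p
              have hb2 := hYbox t p
              have := abs_nonneg (Y (t + 1) p)
              have := abs_nonneg (Y t p)
              nlinarith
          _ = a := by ring
      have hmin := hYmin t _ hbox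
      rw [hexp s] at hmin
      linarith
    have hcge : 0 ≤ c := nonneg_of_quad c q hq0 hseg
    have h1eq := hexp 1
    have hfun1 : (fun p => Y (t + 1) p + 1 * (Y t p - Y (t + 1) p)) = Y t :=
      funext fun p => by ring
    rw [hfun1, psiSurr_self] at h1eq
    have hfd : frobSqT (fun p => Y (t + 1) p - Y t p) ≤ q := by
      rw [hqdef]
      simp only [frobSqT]
      refine Finset.sum_le_sum fun p _ => ?_
      have h2 : (Y (t + 1) p - Y t p) ^ 2 = (Y t p - Y (t + 1) p) ^ 2 := by ring
      rw [h2]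
      have h3 : (1:ℝ) ≤ 1 + lam * weight γ X (Y t) p := by
        simp only [weight]
        nlinarith [Real.exp_pos (-(Y t p - X p) ^ 2 / (2 * γ))]
      nlinarith [sq_nonneg (Y t p - Y (t + 1) p)]
    have hmaj := psiObj_le_psiSurr γ lam hγ hlam X (Y (t + 1)) (L t) (Y t)
    have g1 : PsiObj γ lam X (Y (t + 1)) (L (t + 1))
        = frobSqT (tucker (U1 (t + 1)) (U2 (t + 1)) (U3 (t + 1)) (G (t + 1)) - Y (t + 1))
          + lam * welsch γ X (Y (t + 1)) := by rw [psiObj_eq, hL]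
    have g2 : PsiObj γ lam X (Y (t + 1)) (L t)
        = frobSqT (tucker (U1 t) (U2 t) (U3 t) (G t) - Y (t + 1))
          + lam * welsch γ X (Y (t + 1)) := by rw [psiObj_eq, hL]
    linarith [e1, e2, e3, e4, hfd, hcge, hmaj, h1eq, g1, g2]
  -- Part 2: differences tend to zero
  have hPhi0 : ∀ t, 0 ≤ PsiObj γ lam X (Y t) (L t) := by
    intro t
    rw [psiObj_eq]
    exact add_nonneg (frobSqT_nonneg _) (mul_nonneg hlam.le (welsch_nonneg γ hγ X _))
  have hnn : ∀ t, 0 ≤ frobSqT (fun p => Y (t + 1) p - Y t p)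
      ∧ 0 ≤ α1 * frobSqM (U1 (t + 1) - U1 t) ∧ 0 ≤ α1 * frobSqM (U2 (t + 1) - U2 t)
      ∧ 0 ≤ α1 * frobSqM (U3 (t + 1) - U3 t) ∧ 0 ≤ α2 * frobSqT (G (t + 1) - G t) :=
    fun t => ⟨frobSqT_nonneg _, mul_nonneg hα1.le (frobSqM_nonneg _),
      mul_nonneg hα1.le (frobSqM_nonneg _), mul_nonneg hα1.le (frobSqM_nonneg _),
      mul_nonneg hα2.le (frobSqT_nonneg _)⟩
  have hmono : Antitone (fun t => PsiObj γ lam X (Y t) (L t)) := by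
    refine antitone_nat_of_succ_le fun t => ?_
    obtain ⟨a1, a2, a3, a4, a5⟩ := hnn t
    linarith [hdec t]
  have hbdd : BddBelow (Set.range fun t => PsiObj γ lam X (Y t) (L t)) := by
    refine ⟨0, ?_⟩
    rintro x ⟨t, rfl⟩
    exact hPhi0 t
  have hconv := tendsto_atTop_ciInf hmono hbdd
  have hdiff0 : Filter.Tendsto
      (fun t => PsiObj γ lam X (Y t) (L t) - PsiObj γ lam X (Y (t + 1)) (L (t + 1)))
      Filter.atTop (𝓝 0) := by
    have h2 := hconv.comp (tendsto_add_atTop_nat 1)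
    have h3 := hconv.sub h2
    simpa using h3
  have dYsq : Filter.Tendsto (fun t => frobSqT (fun p => Y (t + 1) p - Y t p))
      Filter.atTop (𝓝 0) := by
    refine squeeze_zero (fun t => frobSqT_nonneg _) (fun t => ?_) hdiff0
    obtain ⟨a1, a2, a3, a4, a5⟩ := hnn t
    linarith [hdec t]
  have dU1sq : Filter.Tendsto (fun t => frobSqM (U1 (t + 1) - U1 t)) Filter.atTop (𝓝 0) := by
    refine tendsto_zero_of_const_mul hα1 ?_
    refine squeeze_zero (fun t => mul_nonneg hα1.le (frobSqM_nonneg _)) (fun t => ?_) hdiff0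
    obtain ⟨a1, a2, a3, a4, a5⟩ := hnn t
    linarith [hdec t]
  have dU2sq : Filter.Tendsto (fun t => frobSqM (U2 (t + 1) - U2 t)) Filter.atTop (𝓝 0) := by
    refine tendsto_zero_of_const_mul hα1 ?_
    refine squeeze_zero (fun t => mul_nonneg hα1.le (frobSqM_nonneg _)) (fun t => ?_) hdiff0
    obtain ⟨a1, a2, a3, a4, a5⟩ := hnn t
    linarith [hdec t]
  have dU3sq : Filter.Tendsto (fun t => frobSqM (U3 (t + 1) - U3 t)) Filter.atTop (𝓝 0) := by
    refine tendsto_zero_of_const_mul hα1 ?_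
    refine squeeze_zero (fun t => mul_nonneg hα1.le (frobSqM_nonneg _)) (fun t => ?_) hdiff0
    obtain ⟨a1, a2, a3, a4, a5⟩ := hnn t
    linarith [hdec t]
  have dGsq : Filter.Tendsto (fun t => frobSqT (G (t + 1) - G t)) Filter.atTop (𝓝 0) := by
    refine tendsto_zero_of_const_mul hα2 ?_
    refine squeeze_zero (fun t => mul_nonneg hα2.le (frobSqT_nonneg _)) (fun t => ?_) hdiff0
    obtain ⟨a1, a2, a3, a4, a5⟩ := hnn t
    linarith [hdec t]
  -- Part 3: subsequence converging to the cluster point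
  obtain ⟨φ, hφ, hφt⟩ := TopologicalSpace.FirstCountableTopology.tendsto_subseq hclu
  have tY : Filter.Tendsto (fun k => Y (φ k)) Filter.atTop (𝓝 Ys) :=
    ((continuous_fst.tendsto (Ys, U1s, U2s, U3s, Gs)).comp hφt).congr fun k => rfl
  have tU1 : Filter.Tendsto (fun k => U1 (φ k)) Filter.atTop (𝓝 U1s) :=
    (((continuous_fst.comp continuous_snd).tendsto (Ys, U1s, U2s, U3s, Gs)).comp hφt).congr
      fun k => rfl
  have tU2 : Filter.Tendsto (fun k => U2 (φ k)) Filter.atTop (𝓝 U2s) :=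
    (((continuous_fst.comp (continuous_snd.comp continuous_snd)).tendsto
      (Ys, U1s, U2s, U3s, Gs)).comp hφt).congr fun k => rfl
  have tU3 : Filter.Tendsto (fun k => U3 (φ k)) Filter.atTop (𝓝 U3s) :=
    (((continuous_fst.comp (continuous_snd.comp (continuous_snd.comp
      continuous_snd))).tendsto (Ys, U1s, U2s, U3s, Gs)).comp hφt).congr fun k => rfl
  have tG : Filter.Tendsto (fun k => G (φ k)) Filter.atTop (𝓝 Gs) :=
    (((continuous_snd.comp (continuous_snd.comp (continuous_snd.comp
      continuous_snd))).tendsto (Ys, U1s, U2s, U3s, Gs)).comp hφt).congr fun k => rfl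
  have tY' : Filter.Tendsto (fun k => Y (φ k + 1)) Filter.atTop (𝓝 Ys) := by
    refine tendsto_pi_nhds.mpr fun p => ?_
    exact succ_tendsto (f := fun t => Y t p) hφ (tendsto_pi_nhds.mp tY p) (entryT_tendsto_zero dYsq p)
  have tU1' : Filter.Tendsto (fun k => U1 (φ k + 1)) Filter.atTop (𝓝 U1s) := by
    refine tendsto_pi_nhds.mpr fun i => tendsto_pi_nhds.mpr fun j => ?_
    exact succ_tendsto (f := fun t => U1 t i j) hφ (tendsto_pi_nhds.mp (tendsto_pi_nhds.mp tU1 i) j)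
      (entryM_tendsto_zero dU1sq i j)
  have tU2' : Filter.Tendsto (fun k => U2 (φ k + 1)) Filter.atTop (𝓝 U2s) := by
    refine tendsto_pi_nhds.mpr fun i => tendsto_pi_nhds.mpr fun j => ?_
    exact succ_tendsto (f := fun t => U2 t i j) hφ (tendsto_pi_nhds.mp (tendsto_pi_nhds.mp tU2 i) j)
      (entryM_tendsto_zero dU2sq i j)
  have tU3' : Filter.Tendsto (fun k => U3 (φ k + 1)) Filter.atTop (𝓝 U3s) := by
    refine tendsto_pi_nhds.mpr fun i => tendsto_pi_nhds.mpr fun j => ?_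
    exact succ_tendsto (f := fun t => U3 t i j) hφ (tendsto_pi_nhds.mp (tendsto_pi_nhds.mp tU3 i) j)
      (entryM_tendsto_zero dU3sq i j)
  have tG' : Filter.Tendsto (fun k => G (φ k + 1)) Filter.atTop (𝓝 Gs) := by
    refine tendsto_pi_nhds.mpr fun p => ?_
    exact succ_tendsto (f := fun t => G t p) hφ (tendsto_pi_nhds.mp tG p) (entryT_tendsto_zero dGsq p)
  have tL : Filter.Tendsto (fun k => L (φ k)) Filter.atTop (𝓝 (tucker U1s U2s U3s Gs)) := by
    have h0 := (cont_tucker.tendsto (U1s, U2s, U3s, Gs)).comp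
      (tU1.prodMk_nhds (tU2.prodMk_nhds (tU3.prodMk_nhds tG)))
    have h1 : Filter.Tendsto (fun k => tucker (U1 (φ k)) (U2 (φ k)) (U3 (φ k)) (G (φ k)))
        Filter.atTop (𝓝 (tucker U1s U2s U3s Gs)) := h0.congr fun k => rfl
    exact h1.congr fun k => (hL (φ k)).symm
  -- Part 4: limit inequalities and conclusions
  have hYsbox : ∀ p, |Ys p| ≤ a := by
    intro p
    have h1 : Filter.Tendsto (fun k => |Y (φ k) p|) Filter.atTop (𝓝 |Ys p|) :=
      ((continuous_abs.tendsto (Ys p)).comp (tendsto_pi_nhds.mp tY p)).congr fun k => rfl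
    exact le_of_tendsto h1 (Filter.Eventually.of_forall fun k => hYbox (φ k) p)
  refine ⟨?_, ?_, ?_, ?_, ?_⟩
  · -- (a) variational inequality
    intro Y' hY'
    have LAgen : ∀ (Z' : Fin n1 × Fin n2 × Fin n3 → ℝ), (∀ p, |Z' p| ≤ a) →
        PsiSurrogate γ lam X Ys (tucker U1s U2s U3s Gs) Ys
          ≤ PsiSurrogate γ lam X Z' (tucker U1s U2s U3s Gs) Ys := by
      intro Z' hZ'
      have t1 : Filter.Tendsto
          (fun k => PsiSurrogate γ lam X (Y (φ k + 1)) (L (φ k)) (Y (φ k))) Filter.atTop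
          (𝓝 (PsiSurrogate γ lam X Ys (tucker U1s U2s U3s Gs) Ys)) :=
        (((cont_psiSurr γ lam X).tendsto (Ys, tucker U1s U2s U3s Gs, Ys)).comp
          (tY'.prodMk_nhds (tL.prodMk_nhds tY))).congr fun k => rfl
      have t2 : Filter.Tendsto
          (fun k => PsiSurrogate γ lam X Z' (L (φ k)) (Y (φ k))) Filter.atTop
          (𝓝 (PsiSurrogate γ lam X Z' (tucker U1s U2s U3s Gs) Ys)) :=
        (((cont_psiSurr γ lam X).tendsto (Z', tucker U1s U2s U3s Gs, Ys)).comp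
          (tendsto_const_nhds.prodMk_nhds (tL.prodMk_nhds tY))).congr fun k => rfl
      exact le_of_tendsto_of_tendsto' t1 t2 fun k => hYmin (φ k) Z' hZ'
    set c := ∑ p : Fin n1 × Fin n2 × Fin n3,
        (2 * (Ys p - tucker U1s U2s U3s Gs p)
          + lam * (2 * weight γ X Ys p * (Ys p - X p))) * (Y' p - Ys p) with hcdef
    set q := ∑ p : Fin n1 × Fin n2 × Fin n3,
        (1 + lam * weight γ X Ys p) * (Y' p - Ys p) ^ 2 with hqdef
    have hq0 : 0 ≤ q := by
      rw [hqdef]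
      refine Finset.sum_nonneg fun p _ => mul_nonneg ?_ (sq_nonneg _)
      have h := Real.exp_pos (-(Ys p - X p) ^ 2 / (2 * γ))
      simp only [weight]
      nlinarith
    have hseg : ∀ s : ℝ, 0 < s → s ≤ 1 → 0 ≤ s * c + s ^ 2 * q := by
      intro s hs0 hs1
      have hbox : ∀ p, |Ys p + s * (Y' p - Ys p)| ≤ a := by
        intro p
        have h1 : Ys p + s * (Y' p - Ys p) = (1 - s) * Ys p + s * Y' p := by ring
        rw [h1]
        calc |(1 - s) * Ys p + s * Y' p| ≤ |(1 - s) * Ys p| + |s * Y' p| := abs_add_le _ _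
          _ = (1 - s) * |Ys p| + s * |Y' p| := by
              rw [abs_mul, abs_mul, abs_of_nonneg (by linarith : (0:ℝ) ≤ 1 - s),
                abs_of_nonneg hs0.le]
          _ ≤ (1 - s) * a + s * a := by
              have hb1 := hYsbox p
              have hb2 := hY' p
              have := abs_nonneg (Ys p)
              have := abs_nonneg (Y' p)
              nlinarith
          _ = a := by ring
      have hmin := LAgen _ hbox
      have hexp : PsiSurrogate γ lam X (fun p => Ys p + s * (Y' p - Ys p))
            (tucker U1s U2s U3s Gs) Ys
          = PsiSurrogate γ lam X Ys (tucker U1s U2s U3s Gs) Ys + s * c + s ^ 2 * q := by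
        rw [hcdef, hqdef]
        exact psiSurr_expand γ lam X Ys (tucker U1s U2s U3s Gs) Ys
          (fun p => Y' p - Ys p) s
      rw [hexp] at hmin
      linarith
    have hcge : 0 ≤ c := nonneg_of_quad c q hq0 hseg
    rw [hcdef] at hcge
    simpa only [weight] using hcge
  · -- (b) U1 direction
    intro V
    have LB : ∀ V' : Matrix (Fin n1) (Fin r1) ℝ,
        frobSqT (tucker U1s U2s U3s Gs - Ys)
          ≤ frobSqT (tucker V' U2s U3s Gs - Ys) + α1 * frobSqM (V' - U1s) := by
      intro V'
      have t1 : Filter.Tendsto (fun k =>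
          frobSqT (tucker (U1 (φ k + 1)) (U2 (φ k)) (U3 (φ k)) (G (φ k)) - Y (φ k + 1))
            + α1 * frobSqM (U1 (φ k + 1) - U1 (φ k))) Filter.atTop
          (𝓝 (frobSqT (tucker U1s U2s U3s Gs - Ys) + α1 * 0)) :=
        (tendsto_fit tU1' tU2 tU3 tG tY').add ((dU1sq.comp hφ.tendsto_atTop).const_mul α1)
      rw [mul_zero, add_zero] at t1
      have t2 : Filter.Tendsto (fun k =>
          frobSqT (tucker V' (U2 (φ k)) (U3 (φ k)) (G (φ k)) - Y (φ k + 1))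
            + α1 * frobSqM (V' - U1 (φ k))) Filter.atTop
          (𝓝 (frobSqT (tucker V' U2s U3s Gs - Ys) + α1 * frobSqM (V' - U1s))) :=
        (tendsto_fit tendsto_const_nhds tU2 tU3 tG tY').add
          ((((cont_frobSqM.tendsto (V' - U1s)).comp
            (tendsto_const_nhds.sub tU1)).congr fun k => rfl).const_mul α1)
      exact le_of_tendsto_of_tendsto' t1 t2 fun k => hU1 (φ k) V'
    set C := ∑ p : Fin n1 × Fin n2 × Fin n3,
        2 * (tucker U1s U2s U3s Gs p - Ys p) * tucker V U2s U3s Gs p with hCdef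
    set Q := ∑ p : Fin n1 × Fin n2 × Fin n3, tucker V U2s U3s Gs p ^ 2 with hQdef
    have hre : ∀ s : ℝ, frobSqT (tucker (U1s + s • V) U2s U3s Gs - Ys)
        = frobSqT (tucker U1s U2s U3s Gs - Ys) + s * C + s ^ 2 * Q := by
      intro s
      rw [hCdef, hQdef]
      simp only [frobSqT_sub, tucker_add_left]
      exact frobSq_expand _ _ _ s
    have hkey : ∀ s : ℝ, 0 ≤ s * C + s ^ 2 * (Q + α1 * frobSqM V) := by
      intro s
      have h := LB (U1s + s • V)
      rw [hre s, frobSqM_smul_diff] at h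
      nlinarith [h]
    have hQ0 : 0 ≤ Q + α1 * frobSqM V := by
      rw [hQdef]
      exact add_nonneg (Finset.sum_nonneg fun p _ => sq_nonneg _)
        (mul_nonneg hα1.le (frobSqM_nonneg V))
    have hC0 : C = 0 := eq_zero_of_quad _ _ hQ0 hkey
    have hfun : (fun s : ℝ => frobSqT (tucker (U1s + s • V) U2s U3s Gs - Ys))
        = fun s => frobSqT (tucker U1s U2s U3s Gs - Ys) + s * C + s ^ 2 * Q :=
      funext fun s => hre s
    rw [hfun]
    have hd := hasDerivAt_quad (frobSqT (tucker U1s U2s U3s Gs - Ys)) C Q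
    simpa [hC0] using hd
  · -- (c) U2 direction
    intro V
    have LB : ∀ V' : Matrix (Fin n2) (Fin r2) ℝ,
        frobSqT (tucker U1s U2s U3s Gs - Ys)
          ≤ frobSqT (tucker U1s V' U3s Gs - Ys) + α1 * frobSqM (V' - U2s) := by
      intro V'
      have t1 : Filter.Tendsto (fun k =>
          frobSqT (tucker (U1 (φ k + 1)) (U2 (φ k + 1)) (U3 (φ k)) (G (φ k)) - Y (φ k + 1))
            + α1 * frobSqM (U2 (φ k + 1) - U2 (φ k))) Filter.atTop
          (𝓝 (frobSqT (tucker U1s U2s U3s Gs - Ys) + α1 * 0)) :=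
        (tendsto_fit tU1' tU2' tU3 tG tY').add ((dU2sq.comp hφ.tendsto_atTop).const_mul α1)
      rw [mul_zero, add_zero] at t1
      have t2 : Filter.Tendsto (fun k =>
          frobSqT (tucker (U1 (φ k + 1)) V' (U3 (φ k)) (G (φ k)) - Y (φ k + 1))
            + α1 * frobSqM (V' - U2 (φ k))) Filter.atTop
          (𝓝 (frobSqT (tucker U1s V' U3s Gs - Ys) + α1 * frobSqM (V' - U2s))) :=
        (tendsto_fit tU1' tendsto_const_nhds tU3 tG tY').add
          ((((cont_frobSqM.tendsto (V' - U2s)).comp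
            (tendsto_const_nhds.sub tU2)).congr fun k => rfl).const_mul α1)
      exact le_of_tendsto_of_tendsto' t1 t2 fun k => hU2 (φ k) V'
    set C := ∑ p : Fin n1 × Fin n2 × Fin n3,
        2 * (tucker U1s U2s U3s Gs p - Ys p) * tucker U1s V U3s Gs p with hCdef
    set Q := ∑ p : Fin n1 × Fin n2 × Fin n3, tucker U1s V U3s Gs p ^ 2 with hQdef
    have hre : ∀ s : ℝ, frobSqT (tucker U1s (U2s + s • V) U3s Gs - Ys)
        = frobSqT (tucker U1s U2s U3s Gs - Ys) + s * C + s ^ 2 * Q := by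
      intro s
      rw [hCdef, hQdef]
      simp only [frobSqT_sub, tucker_add_mid]
      exact frobSq_expand _ _ _ s
    have hkey : ∀ s : ℝ, 0 ≤ s * C + s ^ 2 * (Q + α1 * frobSqM V) := by
      intro s
      have h := LB (U2s + s • V)
      rw [hre s, frobSqM_smul_diff] at h
      nlinarith [h]
    have hQ0 : 0 ≤ Q + α1 * frobSqM V := by
      rw [hQdef]
      exact add_nonneg (Finset.sum_nonneg fun p _ => sq_nonneg _)
        (mul_nonneg hα1.le (frobSqM_nonneg V))
    have hC0 : C = 0 := eq_zero_of_quad _ _ hQ0 hkey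
    have hfun : (fun s : ℝ => frobSqT (tucker U1s (U2s + s • V) U3s Gs - Ys))
        = fun s => frobSqT (tucker U1s U2s U3s Gs - Ys) + s * C + s ^ 2 * Q :=
      funext fun s => hre s
    rw [hfun]
    have hd := hasDerivAt_quad (frobSqT (tucker U1s U2s U3s Gs - Ys)) C Q
    simpa [hC0] using hd
  · -- (d) U3 direction
    intro V
    have LB : ∀ V' : Matrix (Fin n3) (Fin r3) ℝ,
        frobSqT (tucker U1s U2s U3s Gs - Ys)
          ≤ frobSqT (tucker U1s U2s V' Gs - Ys) + α1 * frobSqM (V' - U3s) := by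
      intro V'
      have t1 : Filter.Tendsto (fun k =>
          frobSqT (tucker (U1 (φ k + 1)) (U2 (φ k + 1)) (U3 (φ k + 1)) (G (φ k)) - Y (φ k + 1))
            + α1 * frobSqM (U3 (φ k + 1) - U3 (φ k))) Filter.atTop
          (𝓝 (frobSqT (tucker U1s U2s U3s Gs - Ys) + α1 * 0)) :=
        (tendsto_fit tU1' tU2' tU3' tG tY').add ((dU3sq.comp hφ.tendsto_atTop).const_mul α1)
      rw [mul_zero, add_zero] at t1
      have t2 : Filter.Tendsto (fun k =>
          frobSqT (tucker (U1 (φ k + 1)) (U2 (φ k + 1)) V' (G (φ k)) - Y (φ k + 1))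
            + α1 * frobSqM (V' - U3 (φ k))) Filter.atTop
          (𝓝 (frobSqT (tucker U1s U2s V' Gs - Ys) + α1 * frobSqM (V' - U3s))) :=
        (tendsto_fit tU1' tU2' tendsto_const_nhds tG tY').add
          ((((cont_frobSqM.tendsto (V' - U3s)).comp
            (tendsto_const_nhds.sub tU3)).congr fun k => rfl).const_mul α1)
      exact le_of_tendsto_of_tendsto' t1 t2 fun k => hU3 (φ k) V'
    set C := ∑ p : Fin n1 × Fin n2 × Fin n3,
        2 * (tucker U1s U2s U3s Gs p - Ys p) * tucker U1s U2s V Gs p with hCdef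
    set Q := ∑ p : Fin n1 × Fin n2 × Fin n3, tucker U1s U2s V Gs p ^ 2 with hQdef
    have hre : ∀ s : ℝ, frobSqT (tucker U1s U2s (U3s + s • V) Gs - Ys)
        = frobSqT (tucker U1s U2s U3s Gs - Ys) + s * C + s ^ 2 * Q := by
      intro s
      rw [hCdef, hQdef]
      simp only [frobSqT_sub, tucker_add_right]
      exact frobSq_expand _ _ _ s
    have hkey : ∀ s : ℝ, 0 ≤ s * C + s ^ 2 * (Q + α1 * frobSqM V) := by
      intro s
      have h := LB (U3s + s • V)
      rw [hre s, frobSqM_smul_diff] at h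
      nlinarith [h]
    have hQ0 : 0 ≤ Q + α1 * frobSqM V := by
      rw [hQdef]
      exact add_nonneg (Finset.sum_nonneg fun p _ => sq_nonneg _)
        (mul_nonneg hα1.le (frobSqM_nonneg V))
    have hC0 : C = 0 := eq_zero_of_quad _ _ hQ0 hkey
    have hfun : (fun s : ℝ => frobSqT (tucker U1s U2s (U3s + s • V) Gs - Ys))
        = fun s => frobSqT (tucker U1s U2s U3s Gs - Ys) + s * C + s ^ 2 * Q :=
      funext fun s => hre s
    rw [hfun]
    have hd := hasDerivAt_quad (frobSqT (tucker U1s U2s U3s Gs - Ys)) C Q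
    simpa [hC0] using hd
  · -- (e) core direction
    intro H
    have LB : ∀ H' : Fin r1 × Fin r2 × Fin r3 → ℝ,
        frobSqT (tucker U1s U2s U3s Gs - Ys)
          ≤ frobSqT (tucker U1s U2s U3s H' - Ys) + α2 * frobSqT (H' - Gs) := by
      intro H'
      have t1 : Filter.Tendsto (fun k =>
          frobSqT (tucker (U1 (φ k + 1)) (U2 (φ k + 1)) (U3 (φ k + 1)) (G (φ k + 1))
              - Y (φ k + 1))
            + α2 * frobSqT (G (φ k + 1) - G (φ k))) Filter.atTop
          (𝓝 (frobSqT (tucker U1s U2s U3s Gs - Ys) + α2 * 0)) :=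
        (tendsto_fit tU1' tU2' tU3' tG' tY').add ((dGsq.comp hφ.tendsto_atTop).const_mul α2)
      rw [mul_zero, add_zero] at t1
      have t2 : Filter.Tendsto (fun k =>
          frobSqT (tucker (U1 (φ k + 1)) (U2 (φ k + 1)) (U3 (φ k + 1)) H' - Y (φ k + 1))
            + α2 * frobSqT (H' - G (φ k))) Filter.atTop
          (𝓝 (frobSqT (tucker U1s U2s U3s H' - Ys) + α2 * frobSqT (H' - Gs))) :=
        (tendsto_fit tU1' tU2' tU3' tendsto_const_nhds tY').add
          ((((cont_frobSqT.tendsto (H' - Gs)).comp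
            (tendsto_const_nhds.sub tG)).congr fun k => rfl).const_mul α2)
      exact le_of_tendsto_of_tendsto' t1 t2 fun k => hGmin (φ k) H'
    set C := ∑ p : Fin n1 × Fin n2 × Fin n3,
        2 * (tucker U1s U2s U3s Gs p - Ys p) * tucker U1s U2s U3s H p with hCdef
    set Q := ∑ p : Fin n1 × Fin n2 × Fin n3, tucker U1s U2s U3s H p ^ 2 with hQdef
    have hre : ∀ s : ℝ, frobSqT (tucker U1s U2s U3s (Gs + s • H) - Ys)
        = frobSqT (tucker U1s U2s U3s Gs - Ys) + s * C + s ^ 2 * Q := by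
      intro s
      rw [hCdef, hQdef]
      simp only [frobSqT_sub, tucker_add_core]
      exact frobSq_expand _ _ _ s
    have hkey : ∀ s : ℝ, 0 ≤ s * C + s ^ 2 * (Q + α2 * frobSqT H) := by
      intro s
      have h := LB (Gs + s • H)
      rw [hre s, frobSqT_smul_diff] at h
      nlinarith [h]
    have hQ0 : 0 ≤ Q + α2 * frobSqT H := by
      rw [hQdef]
      exact add_nonneg (Finset.sum_nonneg fun p _ => sq_nonneg _)
        (mul_nonneg hα2.le (frobSqT_nonneg H))
    have hC0 : C = 0 := eq_zero_of_quad _ _ hQ0 hkey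
    have hfun : (fun s : ℝ => frobSqT (tucker U1s U2s U3s (Gs + s • H) - Ys))
        = fun s => frobSqT (tucker U1s U2s U3s Gs - Ys) + s * C + s ^ 2 * Q :=
      funext fun s => hre s
    rw [hfun]
    have hd := hasDerivAt_quad (frobSqT (tucker U1s U2s U3s Gs - Ys)) C Q
    simpa [hC0] using hd
end

section
/- Let X ∈ ℝ^{n1×n2×n3}, λ > 0, γ > 0, a > 0, B = {Y : max_{ijk}|Y_{ijk}| ≤ a}. Fix L_t ∈ ℝ^{n1×n2×n3} and Y_t ∈ B, set W_{t+1} = ω(Y_t), i.e., [W_{t+1}]_{ijk} = exp(−([Y_t]_{ijk} − X_{ijk})²/(2γ)). Then the tensor Y_{t+1} defined entrywise by [Y_{t+1}]_{ijk} = P((λ[W_{t+1}]_{ijk} X_{ijk} + [L_t]_{ijk}) / (λ[W_{t+1}]_{ijk} + 1)), where P clips to [−a, a], is a minimizer over B of the surrogate Ψ̂(Y, L_t; Y_t) = ‖L_t − Y‖²_F + λψ̂(Y; Y_t). -/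
/-- Projection (clipping) of a real number onto the interval `[-a, a]`. -/
def clip (a t : ℝ) : ℝ := max (-a) (min a t)


lemma clip_abs_le {a : ℝ} (ha : 0 < a) (t : ℝ) : |clip a t| ≤ a := by
  rw [abs_le, clip]
  constructor
  · exact le_max_left _ _
  · exact max_le (by linarith) (min_le_left _ _)

lemma clip_sq_le {a : ℝ} (ha : 0 < a) (t y : ℝ) (hy : |y| ≤ a) :
    (clip a t - t) ^ 2 ≤ (y - t) ^ 2 := by
  rw [abs_le] at hy
  rcases le_total t (-a) with h | h
  · have : clip a t = -a := by
      rw [clip, min_eq_right (by linarith), max_eq_left h]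
    rw [this]; nlinarith
  rcases le_total a t with h2 | h2
  · have : clip a t = a := by
      rw [clip, min_eq_left h2, max_eq_right (by linarith)]
    rw [this]; nlinarith
  · have : clip a t = t := by
      rw [clip, min_eq_right h2, max_eq_right h]
    rw [this]; nlinarith

lemma key_quad (c L X a y : ℝ) (hc : 0 < c) (ha : 0 < a) (hy : |y| ≤ a) :
    (L - clip a ((c * X + L) / (c + 1))) ^ 2 + c * (clip a ((c * X + L) / (c + 1)) - X) ^ 2
      ≤ (L - y) ^ 2 + c * (y - X) ^ 2 := by
  set t := (c * X + L) / (c + 1) with ht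
  have hc1 : c + 1 ≠ 0 := by linarith
  have hid : ∀ u : ℝ, (L - u) ^ 2 + c * (u - X) ^ 2
      = (1 + c) * (u - t) ^ 2 + (L - X) ^ 2 * c / (c + 1) := by
    intro u; rw [ht]; field_simp; ring
  rw [hid, hid]
  have h1 : (clip a t - t) ^ 2 ≤ (y - t) ^ 2 := clip_sq_le ha t y hy
  nlinarith

/-- The closed-form clipped update `[Y_{t+1}]_p = P((λ[W_{t+1}]_p X_p + [L_t]_p)/(λ[W_{t+1}]_p + 1))`,
with weights `[W_{t+1}]_p = exp(−([Y_t]_p − X_p)²/(2γ))`, is a minimizer over the box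
`B = {Y : ‖Y‖_∞ ≤ a}` of the surrogate `Ψ̂(Y, L_t; Y_t) = ‖L_t − Y‖²_F + λψ̂(Y; Y_t)`. -/
theorem clipped_update_minimizes_surrogate {n1 n2 n3 : ℕ} (γ lam a : ℝ)
    (hγ : 0 < γ) (hlam : 0 < lam) (ha : 0 < a)
    (X Lt Yt Wt1 Yt1 : Fin n1 × Fin n2 × Fin n3 → ℝ)
    (hYt : ∀ p, |Yt p| ≤ a)
    (hW : ∀ p, Wt1 p = Real.exp (-(Yt p - X p) ^ 2 / (2 * γ)))
    (hYt1 : ∀ p, Yt1 p = clip a ((lam * Wt1 p * X p + Lt p) / (lam * Wt1 p + 1))) :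
    (∀ p, |Yt1 p| ≤ a) ∧
    ∀ Y : Fin n1 × Fin n2 × Fin n3 → ℝ, (∀ p, |Y p| ≤ a) →
      PsiSurrogate γ lam X Yt1 Lt Yt ≤ PsiSurrogate γ lam X Y Lt Yt := by
  have habs : ∀ p, |Yt1 p| ≤ a := fun p => by rw [hYt1 p]; exact clip_abs_le ha _
  refine ⟨habs, fun Y hY => ?_⟩
  have hsum : ∀ Z : Fin n1 × Fin n2 × Fin n3 → ℝ,
      PsiSurrogate γ lam X Z Lt Yt
      = (∑ p : Fin n1 × Fin n2 × Fin n3,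
          ((Lt p - Z p) ^ 2 + lam * weight γ X Yt p * (Z p - X p) ^ 2))
        + lam * (welsch γ X Yt
          - ∑ p : Fin n1 × Fin n2 × Fin n3, weight γ X Yt p * (Yt p - X p) ^ 2) := by
    intro Z
    rw [PsiSurrogate, welschSurrogate, Finset.sum_add_distrib, mul_sub, mul_add,
      Finset.mul_sum]
    simp only [← mul_assoc]
    ring
  rw [hsum Yt1, hsum Y]
  gcongr (?_ + _)
  apply Finset.sum_le_sum
  intro p _
  have hwp : weight γ X Yt p = Wt1 p := (hW p).symm
  have hc : 0 < lam * weight γ X Yt p := by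
    apply mul_pos hlam; exact Real.exp_pos _
  have := key_quad (lam * weight γ X Yt p) (Lt p) (X p) a (Y p) hc ha (hY p)
  rw [hwp] at this ⊢
  rw [hYt1 p]
  exact this
end
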